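/- Local completeness criterion for Janet-like division: a finite set U of monomials is complete w.r.t. Janet-like division if and only if for every u ∈ U and every nonmultiplicative power p ∈ NMP(u,U), the monomial u·p has a Janet-like divisor in U. -/

import Mathlib

variable {n : ℕ}

/-- `x_i` is Janet-multiplicative for `t` with respect to `U`. -/
def JanetMult (U : Finset (Fin n → ℕ)) (t : Fin n → ℕ) (i : Fin n) : Prop :=
  ¬ ∃ v ∈ U, (∀ j, i < j → v j = t j) ∧ t i < v i

/-- `h_i(t,U) = max{deg_i v : v ∈ U, deg_j v = deg_j t ∀ j > i} - deg_i t`. -/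
def hdeg (U : Finset (Fin n → ℕ)) (t : Fin n → ℕ) (i : Fin n) : ℕ :=
  (U.filter (fun v => ∀ j, i < j → v j = t j)).sup (fun v => v i) - t i

/-- `x_i^k` is the Janet-like nonmultiplicative power of `t` w.r.t. `U`. -/
def isNMP (U : Finset (Fin n → ℕ)) (t : Fin n → ℕ) (i : Fin n) (k : ℕ) : Prop :=
  IsLeast {d | ∃ v ∈ U, (∀ j, i < j → v j = t j) ∧ t i < v i ∧ d = v i - t i} k

/-- `t` Janet-like divides `w` w.r.t. `U`: `t | w` and the quotient is not
divisible by any nonmultiplicative power of `t`. -/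
def JLdiv (U : Finset (Fin n → ℕ)) (t w : Fin n → ℕ) : Prop :=
  (∀ j, t j ≤ w j) ∧ ∀ i k, isNMP U t i k → w i - t i < k

/-- If the NMP set of `t` at `i` is nonempty, its infimum is an NMP. -/
lemma isNMP_of_mem {U : Finset (Fin n → ℕ)} {t : Fin n → ℕ} {i : Fin n} {d : ℕ}
    (hd : d ∈ {d | ∃ v ∈ U, (∀ j, i < j → v j = t j) ∧ t i < v i ∧ d = v i - t i}) :
    ∃ k ≤ d, isNMP U t i k := by
  refine ⟨sInf _, Nat.sInf_le hd, Nat.sInf_mem ⟨d, hd⟩, fun b hb => Nat.sInf_le hb⟩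

theorem stmt12 (U : Finset (Fin n → ℕ)) :
    (∀ u ∈ U, ∀ v : Fin n → ℕ, ∃ s ∈ U, JLdiv U s (u + v)) ↔
      (∀ u ∈ U, ∀ i k, isNMP U u i k → ∃ s ∈ U, JLdiv U s (u + Pi.single i k)) := by
  constructor
  · intro h u hu i k _
    exact h u hu (Pi.single i k)
  · intro h u hu v
    set w : Fin n → ℕ := u + v with hw
    have huw : ∀ j, u j ≤ w j := fun j => Nat.le_add_right _ _
    -- the set of divisors of w in U
    set S : Finset (Fin n → ℕ) := U.filter (fun t => ∀ j, t j ≤ w j) with hS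
    have hSne : S.Nonempty := ⟨u, Finset.mem_filter.mpr ⟨hu, huw⟩⟩
    -- take a maximal divisor w.r.t. reverse lexicographic order
    letI : LinearOrder (Lex (Fin n → ℕ)) :=
      @Pi.Lex.linearOrder (Fin n) (fun _ => ℕ) _
        (inferInstance : WellFoundedLT (Fin n)) _
    obtain ⟨u₀, hu₀S, hmax⟩ :=
      Finset.exists_max_image S (fun t => (toLex (fun m : Fin n => t m.rev) : Lex (Fin n → ℕ))) hSne
    rw [hS, Finset.mem_filter] at hu₀S
    obtain ⟨hu₀U, hu₀w⟩ := hu₀S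
    refine ⟨u₀, hu₀U, hu₀w, ?_⟩
    by_contra hcon
    push_neg at hcon
    obtain ⟨i, k, hnmp, hk⟩ := hcon
    -- the NMP power x_i^k divides w / u₀; apply local condition
    obtain ⟨s, hsU, hst, hsnmp⟩ := h u₀ hu₀U i k hnmp
    set t : Fin n → ℕ := u₀ + Pi.single i k with ht
    have hti : t i = u₀ i + k := by simp [ht]
    have htj : ∀ j, j ≠ i → t j = u₀ j := by
      intro j hj; simp [ht, Pi.single_eq_of_ne hj]
    have htw : ∀ j, t j ≤ w j := by
      intro j
      rcases eq_or_ne j i with rfl | hj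
      · have h1 := hu₀w j
        rw [hti]
        omega
      · rw [htj j hj]; exact hu₀w j
    have hsw : ∀ j, s j ≤ w j := fun j => le_trans (hst j) (htw j)
    -- key step 1: s agrees with u₀ above i
    have key1 : ∀ m : ℕ, ∀ j : Fin n, n - (j : ℕ) ≤ m → i < j → s j = u₀ j := by
      intro m
      induction m with
      | zero => intro j hm; omega
      | succ m ih =>
        intro j hm hij
        have hsu : s j ≤ u₀ j := (htj j (ne_of_gt hij)) ▸ hst j
        rcases eq_or_lt_of_le hsu with heq | hlt
        · exact heq
        · exfalso
          have hd : u₀ j - s j ∈ {d | ∃ v ∈ U, (∀ j', j < j' → v j' = s j') ∧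
              s j < v j ∧ d = v j - s j} := by
            refine ⟨u₀, hu₀U, ?_, hlt, rfl⟩
            intro j' hj'
            exact (ih j' (by have := j'.isLt; have : (j:ℕ) < j' := hj'; omega)
              (lt_trans hij hj')).symm
          obtain ⟨k', hk'le, hk'⟩ := isNMP_of_mem hd
          have := hsnmp j k' hk'
          rw [htj j (ne_of_gt hij)] at this
          omega
    have key1' : ∀ j, i < j → s j = u₀ j := fun j hj => key1 n j (by omega) hj
    -- key step 2: s i > u₀ i
    obtain ⟨⟨v', hv'U, hv'eq, hv'lt, hv'd⟩, _⟩ := hnmp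
    have key2 : u₀ i < s i := by
      by_contra hsi
      push_neg at hsi
      have hd : v' i - s i ∈ {d | ∃ v ∈ U, (∀ j', i < j' → v j' = s j') ∧
          s i < v i ∧ d = v i - s i} := by
        refine ⟨v', hv'U, ?_, by omega, rfl⟩
        intro j' hj'
        rw [hv'eq j' hj', key1' j' hj']
      obtain ⟨k'', hk''le, hk''⟩ := isNMP_of_mem hd
      have := hsnmp i k'' hk''
      rw [hti] at this
      omega
    -- s is a divisor of w strictly larger in revlex order: contradiction
    have hsS : s ∈ S := Finset.mem_filter.mpr ⟨hsU, hsw⟩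
    have hle := hmax s hsS
    have hlt : toLex (fun m : Fin n => u₀ m.rev) < toLex (fun m : Fin n => s m.rev) := by
      refine ⟨i.rev, ?_, ?_⟩
      · intro m' hm'
        have : i < m'.rev := by
          have h1 := Fin.val_rev m'
          have h2 := Fin.val_rev i
          have h3 : (m' : ℕ) < i.rev := hm'
          have := m'.isLt; have := i.isLt
          exact Fin.lt_def.mpr (by omega)
        exact (key1' m'.rev this).symm
      · simpa [Fin.rev_rev] using key2
    exact absurd hle (not_le_of_gt hlt)
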